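/- For every real θ with 0 < θ < 1, lim_{N→∞} (1/N) · Σ_{j=1}^{⌊θN⌋} log(2·sin(πj/N)) = ∫_0^θ log(2·sin(πt)) dt. -/

import Mathlib

open Real Finset Filter MeasureTheory Set intervalIntegral


lemma intLog {x : ℝ} (hx0 : 0 ≤ x) (hx1 : x ≤ 1) : IntervalIntegrable Real.log volume 0 x := by
  rw [intervalIntegrable_iff_integrableOn_Ioc_of_le hx0]
  have hcont : ContinuousOn (fun t : ℝ => -(t * Real.log t - t)) (Icc 0 x) :=
    ((Real.continuous_mul_log.sub continuous_id).neg).continuousOn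
  have hderiv : ∀ t ∈ Ioo (0:ℝ) x, HasDerivAt (fun t : ℝ => -(t * Real.log t - t)) (-Real.log t) t := by
    intro t ht
    have h1 : HasDerivAt (fun t : ℝ => t * Real.log t) (Real.log t + 1) t := by
      have := (hasDerivAt_id t).mul (Real.hasDerivAt_log ht.1.ne')
      exact this.congr_deriv (by simp only [id_eq]; rw [mul_inv_cancel₀ ht.1.ne']; ring)
    have h2 := (h1.sub (hasDerivAt_id t)).neg
    exact h2.congr_deriv (by ring)
  have hpos : ∀ t ∈ Ioo (0:ℝ) x, 0 ≤ -Real.log t := by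
    intro t ht
    simpa using Real.log_nonpos ht.1.le (ht.2.le.trans hx1)
  have := integrableOn_deriv_of_nonneg hcont hderiv hpos
  have h2 := this.neg
  exact h2.congr (Filter.Eventually.of_forall fun t => by simp)

lemma valLog {x : ℝ} (hx0 : 0 ≤ x) (hx1 : x ≤ 1) :
    ∫ t in (0:ℝ)..x, Real.log t = x * Real.log x - x := by
  rcases eq_or_lt_of_le hx0 with h | h
  · simp [← h]
  · have hcont : ContinuousOn (fun t : ℝ => t * Real.log t - t) (Icc 0 x) :=
      (Real.continuous_mul_log.sub continuous_id).continuousOn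
    have hderiv : ∀ t ∈ Ioo (0:ℝ) x,
        HasDerivWithinAt (fun t : ℝ => t * Real.log t - t) (Real.log t) (Ioi t) t := by
      intro t ht
      have h1 : HasDerivAt (fun t : ℝ => t * Real.log t) (Real.log t + 1) t := by
        have := (hasDerivAt_id t).mul (Real.hasDerivAt_log ht.1.ne')
        exact this.congr_deriv (by simp only [id_eq]; rw [mul_inv_cancel₀ ht.1.ne']; ring)
      have h2 := h1.sub (hasDerivAt_id t)
      exact h2.hasDerivWithinAt.congr_deriv (by ring)
    have := integral_eq_sub_of_hasDeriv_right_of_le hx0 hcont hderiv (intLog hx0 hx1)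
    simpa using this


noncomputable def gg : ℝ → ℝ :=
  fun t => Real.log (2 * Real.pi) + Real.log (Real.sin (Real.pi * t) / (Real.pi * t))

lemma gg_eq {t : ℝ} (ht0 : 0 < t) (ht1 : t < 1) :
    Real.log (2 * Real.sin (Real.pi * t)) = Real.log t + gg t := by
  have hsin : 0 < Real.sin (Real.pi * t) :=
    Real.sin_pos_of_pos_of_lt_pi (by positivity) (by nlinarith [Real.pi_pos])
  have hπt : (0:ℝ) < Real.pi * t := by positivity
  unfold gg
  rw [Real.log_div hsin.ne' hπt.ne', Real.log_mul two_ne_zero Real.pi_pos.ne',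
    Real.log_mul Real.pi_pos.ne' ht0.ne', Real.log_mul two_ne_zero hsin.ne']
  ring

lemma gg_contAt0 : ContinuousAt gg 0 := by
  have hs : HasDerivAt (fun t : ℝ => Real.sin (Real.pi * t)) Real.pi 0 := by
    have := (Real.hasDerivAt_sin (Real.pi * 0)).comp 0 ((hasDerivAt_id (0:ℝ)).const_mul Real.pi)
    exact this.congr_deriv (by simp)
  have hslope := hasDerivAt_iff_tendsto_slope.1 hs
  have h1 : Tendsto (fun t : ℝ => Real.sin (Real.pi * t) / (Real.pi * t)) (nhdsWithin 0 {(0:ℝ)}ᶜ)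
      (nhds 1) := by
    have h2 : Tendsto (fun t : ℝ => slope (fun t : ℝ => Real.sin (Real.pi * t)) 0 t / Real.pi)
        (nhdsWithin 0 {(0:ℝ)}ᶜ) (nhds (Real.pi / Real.pi)) := hslope.div_const _
    rw [div_self Real.pi_pos.ne'] at h2
    have h3 : ∀ t : ℝ, slope (fun t : ℝ => Real.sin (Real.pi * t)) 0 t / Real.pi
        = Real.sin (Real.pi * t) / (Real.pi * t) := by
      intro t
      rw [slope_def_field]
      simp only [mul_zero, Real.sin_zero, sub_zero]
      rw [div_div, mul_comm t]
    exact h2.congr h3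
  have hgg0 : gg 0 = Real.log (2 * Real.pi) + Real.log 1 := by simp [gg]
  unfold ContinuousAt
  rw [hgg0, ← nhdsNE_sup_pure (0:ℝ), tendsto_sup]
  constructor
  · exact tendsto_const_nhds.add (((Real.continuousAt_log one_ne_zero).tendsto).comp h1)
  · rw [hgg0.symm]
    exact tendsto_pure_nhds gg 0

lemma gg_cont {b : ℝ} (hb : b < 1) : ContinuousOn gg (Icc 0 b) := by
  intro x hx
  rcases eq_or_lt_of_le hx.1 with h | h
  · rw [← h]
    exact gg_contAt0.continuousWithinAt
  · have hsin : 0 < Real.sin (Real.pi * x) :=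
      Real.sin_pos_of_pos_of_lt_pi (by positivity) (by nlinarith [Real.pi_pos, hx.2])
    have hπx : (0:ℝ) < Real.pi * x := by positivity
    apply ContinuousAt.continuousWithinAt
    apply ContinuousAt.add continuousAt_const
    apply (Real.continuousAt_log (by positivity)).comp
    exact (Real.continuous_sin.continuousAt.comp
      (continuousAt_const.mul continuousAt_id)).div (continuousAt_const.mul continuousAt_id) hπx.ne'


lemma sum_sub_integral {h : ℝ → ℝ} {N mN : ℕ}
    (hint : ∀ k : ℕ, k < mN → IntervalIntegrable h volume ((k:ℝ)/N) (((k:ℝ)+1)/N)) :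
    (1/(N:ℝ)) * ∑ j ∈ Icc 1 mN, h ((j:ℝ)/N) - ∫ t in (0:ℝ)..((mN:ℝ)/N), h t
      = ∑ k ∈ range mN, ((1/(N:ℝ)) * h (((k:ℝ)+1)/N) - ∫ t in ((k:ℝ)/N)..(((k:ℝ)+1)/N), h t) := by
  have hint' : ∀ k : ℕ, k < mN →
      IntervalIntegrable h volume (((k:ℕ):ℝ)/N) ((((k+1:ℕ)):ℝ)/N) := by
    intro k hk
    have := hint k hk
    push_cast
    convert this using 2
  have hadj := intervalIntegral.sum_integral_adjacent_intervals (μ := volume)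
      (a := fun k : ℕ => ((k:ℕ):ℝ)/N) (n := mN) hint'
  simp only [Nat.cast_zero, zero_div] at hadj
  have hsum : ∑ j ∈ Icc 1 mN, h ((j:ℝ)/N) = ∑ k ∈ range mN, h (((k:ℝ)+1)/N) := by
    rw [← Finset.Ico_add_one_right_eq_Icc, Finset.sum_Ico_eq_sum_range]
    apply Finset.sum_congr rfl
    intro i _
    congr 1
    push_cast
    ring
  rw [hsum, Finset.mul_sum, ← hadj, ← Finset.sum_sub_distrib]
  apply Finset.sum_congr rfl
  intro k _
  congr 2
  push_cast
  ring


lemma part1_bounds (θ : ℝ) (h0 : 0 < θ) (h1 : θ < 1) {N : ℕ} (hN : 1 ≤ N)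
    (hm : 1 ≤ ⌊θ*(N:ℝ)⌋₊) :
    0 ≤ (1/(N:ℝ)) * ∑ j ∈ Icc 1 ⌊θ*(N:ℝ)⌋₊, Real.log ((j:ℝ)/N)
        - ((⌊θ*(N:ℝ)⌋₊:ℝ)/N * Real.log ((⌊θ*(N:ℝ)⌋₊:ℝ)/N) - (⌊θ*(N:ℝ)⌋₊:ℝ)/N)
    ∧ (1/(N:ℝ)) * ∑ j ∈ Icc 1 ⌊θ*(N:ℝ)⌋₊, Real.log ((j:ℝ)/N)
        - ((⌊θ*(N:ℝ)⌋₊:ℝ)/N * Real.log ((⌊θ*(N:ℝ)⌋₊:ℝ)/N) - (⌊θ*(N:ℝ)⌋₊:ℝ)/N)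
      ≤ 1/(N:ℝ) + Real.log N / N := by
  set M := ⌊θ*(N:ℝ)⌋₊ with hM_def
  have hNpos : (0:ℝ) < N := by exact_mod_cast hN
  have hMθ : (M:ℝ) ≤ θ * N := Nat.floor_le (by positivity)
  have hMN : (M:ℝ) ≤ N := hMθ.trans (by nlinarith)
  have hu0 : (0:ℝ) ≤ (M:ℝ)/N := by positivity
  have hu1 : (M:ℝ)/N ≤ 1 := (div_le_one hNpos).2 hMN
  rw [← valLog hu0 hu1]
  have hcell : ∀ k : ℕ, k < M → IntervalIntegrable Real.log volume ((k:ℝ)/N) (((k:ℝ)+1)/N) := by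
    intro k hk
    have hk1 : ((k:ℝ)+1) ≤ (M:ℝ) := by exact_mod_cast Nat.succ_le_of_lt hk
    have hkM : (k:ℝ) ≤ (N:ℝ) := by linarith
    have hi1 : IntervalIntegrable Real.log volume 0 ((k:ℝ)/N) :=
      intLog (by positivity) ((div_le_one hNpos).2 hkM)
    have hi2 : IntervalIntegrable Real.log volume 0 (((k:ℝ)+1)/N) :=
      intLog (by positivity) ((div_le_one hNpos).2 (hk1.trans hMN))
    exact hi1.symm.trans hi2
  rw [sum_sub_integral hcell]
  set φ : ℕ → ℝ := fun j => (1/(N:ℝ)) * Real.log ((j:ℝ)/N) with hφ_def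
  set e : ℕ → ℝ := fun k =>
    (1/(N:ℝ)) * Real.log (((k:ℝ)+1)/N) - ∫ t in ((k:ℝ)/N)..(((k:ℝ)+1)/N), Real.log t with he_def
  have key : ∀ k : ℕ, 1 ≤ k → (k:ℝ) + 1 ≤ (M:ℝ) → 0 ≤ e k ∧ e k ≤ φ (k+1) - φ k := by
    intro k hk hkM
    have hkpos : (0:ℝ) < k := by exact_mod_cast hk
    have ha : (0:ℝ) < (k:ℝ)/N := div_pos hkpos hNpos
    have hcpos : (0:ℝ) < ((k:ℝ)+1)/N := by positivity
    have hc1 : ((k:ℝ)+1)/N ≤ 1 := (div_le_one hNpos).2 (hkM.trans hMN)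
    have ha1 : (k:ℝ)/N ≤ 1 := (div_le_one hNpos).2 (by linarith [hkM.trans hMN, hNpos])
    have hia := intLog ha.le ha1
    have hic := intLog hcpos.le hc1
    have hval : ∫ t in ((k:ℝ)/N)..(((k:ℝ)+1)/N), Real.log t
        = (((k:ℝ)+1)/N * Real.log (((k:ℝ)+1)/N) - ((k:ℝ)+1)/N)
          - ((k:ℝ)/N * Real.log ((k:ℝ)/N) - (k:ℝ)/N) := by
      rw [← integral_interval_sub_left hic hia, valLog ha.le ha1, valLog hcpos.le hc1]
    set a := (k:ℝ)/N with ha_def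
    set c := ((k:ℝ)+1)/N with hc_def
    have hca : c - a = 1/(N:ℝ) := by rw [hc_def, ha_def, div_sub_div_same]; norm_num
    have hl1 : Real.log c - Real.log a ≤ c/a - 1 := by
      have h := Real.log_le_sub_one_of_pos (div_pos hcpos ha)
      rwa [Real.log_div hcpos.ne' ha.ne'] at h
    have hl2 : Real.log a - Real.log c ≤ a/c - 1 := by
      have h := Real.log_le_sub_one_of_pos (div_pos ha hcpos)
      rwa [Real.log_div ha.ne' hcpos.ne'] at h
    have h5 : a * (Real.log c - Real.log a) ≤ a * (c/a - 1) :=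
      mul_le_mul_of_nonneg_left hl1 ha.le
    have h6 : a * (c/a - 1) = c - a := by field_simp
    have h7 : c * (Real.log a - Real.log c) ≤ c * (a/c - 1) :=
      mul_le_mul_of_nonneg_left hl2 hcpos.le
    have h8 : c * (a/c - 1) = a - c := by field_simp
    have hgoal : e k = (c - a) - a * (Real.log c - Real.log a) := by
      rw [he_def]
      simp only
      rw [hval, ← hca]
      ring
    have hgoal2 : φ (k+1) - φ k = (c - a) * (Real.log c - Real.log a) := by
      rw [hφ_def]
      simp only
      push_cast
      rw [← hca]
      ring
    constructor
    · rw [hgoal]; linarith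
    · rw [hgoal, hgoal2]; nlinarith [h5, h6, h7, h8]
  obtain ⟨M', hM'⟩ := Nat.exists_eq_add_of_le hm
  have he0 : e 0 = 1/(N:ℝ) := by
    rw [he_def]
    simp only [Nat.cast_zero, zero_div, zero_add]
    rw [valLog (by positivity) ((div_le_one hNpos).2 (by exact_mod_cast hN))]
    ring
  have hMM' : M = M' + 1 := by omega
  rw [hMM', Finset.sum_range_succ']
  have he0' : (0:ℝ) ≤ e 0 := by rw [he0]; positivity
  constructor
  · apply add_nonneg
    · apply Finset.sum_nonneg
      intro i hi
      have hi' : i < M' := Finset.mem_range.1 hi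
      refine (key (i+1) le_add_self ?_).1
      have h9 : i + 1 + 1 ≤ M := by omega
      exact_mod_cast h9
    · exact he0'
  · have hsum_le : ∑ i ∈ range M', e (i+1) ≤ ∑ i ∈ range M', (φ (i+1+1) - φ (i+1)) := by
      apply Finset.sum_le_sum
      intro i hi
      have hi' : i < M' := Finset.mem_range.1 hi
      refine (key (i+1) le_add_self ?_).2
      have h9 : i + 1 + 1 ≤ M := by omega
      exact_mod_cast h9
    have htel : ∑ i ∈ range M', (φ (i+1+1) - φ (i+1)) = φ (M'+1) - φ 1 :=
      Finset.sum_range_sub (fun i => φ (i+1)) M'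
    have hφbound : φ (M'+1) - φ 1 ≤ Real.log N / N := by
      rw [hφ_def]
      simp only [Nat.cast_one]
      have hMpos : (0:ℝ) < ((M'+1:ℕ):ℝ) := by positivity
      rw [Real.log_div (by positivity : ((M'+1:ℕ):ℝ) ≠ 0) hNpos.ne',
        Real.log_div one_ne_zero hNpos.ne', Real.log_one]
      have hlogle : Real.log ((M'+1:ℕ):ℝ) ≤ Real.log N := by
        apply Real.log_le_log hMpos
        rw [← hMM']
        exact hMN
      have h1N : (0:ℝ) ≤ 1/(N:ℝ) := by positivity
      calc (1/(N:ℝ)) * (Real.log ((M'+1:ℕ):ℝ) - Real.log N) - (1/(N:ℝ)) * (0 - Real.log N)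
          = (1/(N:ℝ)) * Real.log ((M'+1:ℕ):ℝ) := by ring
        _ ≤ (1/(N:ℝ)) * Real.log N := mul_le_mul_of_nonneg_left hlogle h1N
        _ = Real.log N / N := by ring
    have hfinal : ∑ i ∈ range M', e (i+1) + e 0 ≤ 1/(N:ℝ) + Real.log N / N := by
      rw [he0]
      linarith [hsum_le, htel.le, hφbound]
    exact hfinal


lemma part2 (θ : ℝ) (h0 : 0 < θ) (h1 : θ < 1) :
    Tendsto (fun N : ℕ => (1/(N:ℝ)) * ∑ j ∈ Icc 1 ⌊θ*(N:ℝ)⌋₊, gg ((j:ℝ)/N)) atTop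
      (nhds (∫ t in (0:ℝ)..θ, gg t)) := by
  set b : ℝ := (1+θ)/2 with hb_def
  have hθb : θ < b := by rw [hb_def]; linarith
  have hb1 : b < 1 := by rw [hb_def]; linarith
  have hb0 : (0:ℝ) < b := by rw [hb_def]; linarith
  have hgc := gg_cont hb1
  obtain ⟨C, hC⟩ := (isCompact_Icc : IsCompact (Icc (0:ℝ) b)).exists_bound_of_continuousOn hgc
  have hC0 : 0 ≤ C := le_trans (norm_nonneg (gg 0)) (hC 0 ⟨le_refl 0, hb0.le⟩)
  set u : ℕ → ℝ := fun N => ((⌊θ*(N:ℝ)⌋₊ : ℝ))/N with hu_def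
  have hu : Tendsto u atTop (nhds θ) :=
    (tendsto_nat_floor_mul_div_atTop h0.le).comp tendsto_natCast_atTop_atTop
  have huθ : ∀ N : ℕ, 1 ≤ N → u N ≤ θ := by
    intro N hN
    have hNpos : (0:ℝ) < N := by exact_mod_cast hN
    rw [hu_def]
    simp only
    rw [div_le_iff₀ hNpos]
    exact Nat.floor_le (by positivity)
  have hu0 : ∀ N : ℕ, 0 ≤ u N := fun N => by rw [hu_def]; positivity
  have hint : ∀ x y : ℝ, x ∈ Icc 0 b → y ∈ Icc 0 b → IntervalIntegrable gg volume x y := by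
    intro x y hx hy
    apply (hgc.mono ?_).intervalIntegrable
    rw [Set.uIcc]
    exact Icc_subset_Icc (le_min hx.1 hy.1) (max_le hx.2 hy.2)
  have h0mem : (0:ℝ) ∈ Icc (0:ℝ) b := ⟨le_refl 0, hb0.le⟩
  have hθmem : θ ∈ Icc (0:ℝ) b := ⟨h0.le, hθb.le⟩
  have hI : Tendsto (fun N => ∫ t in (0:ℝ)..(u N), gg t) atTop (nhds (∫ t in (0:ℝ)..θ, gg t)) := by
    rw [tendsto_iff_dist_tendsto_zero]
    have hbound : Tendsto (fun N => C * |u N - θ|) atTop (nhds 0) := by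
      have := ((hu.sub_const θ).abs).const_mul C
      simpa using this
    apply squeeze_zero' (Eventually.of_forall fun N => dist_nonneg) ?_ hbound
    filter_upwards [eventually_ge_atTop 1] with N hN
    have humem : u N ∈ Icc (0:ℝ) b := ⟨hu0 N, (huθ N hN).trans hθb.le⟩
    have hsub : (∫ t in (0:ℝ)..(u N), gg t) - ∫ t in (0:ℝ)..θ, gg t = ∫ t in θ..(u N), gg t :=
      intervalIntegral.integral_interval_sub_left (hint 0 (u N) h0mem humem)
        (hint 0 θ h0mem hθmem)
    rw [Real.dist_eq, hsub]
    have hmem : Set.uIoc θ (u N) ⊆ Icc (0:ℝ) b := by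
      unfold Set.uIoc
      exact subset_trans Ioc_subset_Icc_self
        (Icc_subset_Icc (le_min h0.le (hu0 N)) (max_le hθb.le humem.2))
    have := intervalIntegral.norm_integral_le_of_norm_le_const
      (f := gg) (a := θ) (b := u N) (C := C) (fun x hx => hC x (hmem hx))
    simpa [Real.norm_eq_abs] using this
  have hE : Tendsto (fun N : ℕ => (1/(N:ℝ)) * ∑ j ∈ Icc 1 ⌊θ*(N:ℝ)⌋₊, gg ((j:ℝ)/N)
      - ∫ t in (0:ℝ)..(u N), gg t) atTop (nhds 0) := by
    rw [Metric.tendsto_atTop]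
    intro ε hε
    have huc := (isCompact_Icc : IsCompact (Icc (0:ℝ) b)).uniformContinuousOn_of_continuous hgc
    rw [Metric.uniformContinuousOn_iff] at huc
    obtain ⟨δ, hδ, hucδ⟩ := huc (ε/2) (half_pos hε)
    obtain ⟨N₁, hN₁⟩ := exists_nat_gt (1/δ)
    refine ⟨max N₁ 1, fun N hN => ?_⟩
    have hN1 : 1 ≤ N := le_trans (le_max_right N₁ 1) hN
    have hNN₁ : N₁ ≤ N := le_trans (le_max_left N₁ 1) hN
    have hNpos : (0:ℝ) < N := by exact_mod_cast hN1
    have hδN : 1/(N:ℝ) < δ := by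
      have h2 : 1/δ < (N:ℝ) := lt_of_lt_of_le hN₁ (by exact_mod_cast hNN₁)
      rw [div_lt_iff₀ hNpos]
      rw [div_lt_iff₀ hδ] at h2
      nlinarith [h2]
    set M := ⌊θ*(N:ℝ)⌋₊ with hM_def
    have hMθ : (M:ℝ) ≤ θ * N := Nat.floor_le (by positivity)
    have hMN : (M:ℝ) ≤ N := hMθ.trans (by nlinarith)
    have hcellmem : ∀ k : ℕ, k < M → ((k:ℝ)/N ∈ Icc (0:ℝ) b ∧ ((k:ℝ)+1)/N ∈ Icc (0:ℝ) b) := by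
      intro k hk
      have hk1 : ((k:ℝ)+1) ≤ (M:ℝ) := by exact_mod_cast Nat.succ_le_of_lt hk
      constructor
      · refine ⟨by positivity, ?_⟩
        have : (k:ℝ)/N ≤ θ := by
          rw [div_le_iff₀ hNpos]
          linarith
        linarith
      · refine ⟨by positivity, ?_⟩
        have : ((k:ℝ)+1)/N ≤ θ := by
          rw [div_le_iff₀ hNpos]
          linarith
        linarith
    have hcell : ∀ k : ℕ, k < M → IntervalIntegrable gg volume ((k:ℝ)/N) (((k:ℝ)+1)/N) := by
      intro k hk
      exact hint _ _ (hcellmem k hk).1 (hcellmem k hk).2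
    rw [Real.dist_0_eq_abs]
    rw [sum_sub_integral hcell]
    have hterm : ∀ k ∈ range M,
        |(1/(N:ℝ)) * gg (((k:ℝ)+1)/N) - ∫ t in ((k:ℝ)/N)..(((k:ℝ)+1)/N), gg t| ≤ (ε/2) * (1/N) := by
      intro k hk
      have hkM := Finset.mem_range.1 hk
      have hca : ((k:ℝ)+1)/N - (k:ℝ)/N = 1/N := by rw [div_sub_div_same]; norm_num
      have hconst : (1/(N:ℝ)) * gg (((k:ℝ)+1)/N)
          = ∫ _ in ((k:ℝ)/N)..(((k:ℝ)+1)/N), gg (((k:ℝ)+1)/N) := by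
        rw [intervalIntegral.integral_const, smul_eq_mul, hca]
      rw [hconst, ← intervalIntegral.integral_sub intervalIntegrable_const (hcell k hkM)]
      have hptwise : ∀ t ∈ Set.uIoc ((k:ℝ)/N) (((k:ℝ)+1)/N),
          ‖gg (((k:ℝ)+1)/N) - gg t‖ ≤ ε/2 := by
        intro t ht
        have hac : (k:ℝ)/N ≤ ((k:ℝ)+1)/N := by
          gcongr
          linarith
        have hmemIoc : t ∈ Set.Ioc ((k:ℝ)/N) (((k:ℝ)+1)/N) := by
          rwa [Set.uIoc_of_le hac] at ht
        have htmem : t ∈ Icc (0:ℝ) b :=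
          ⟨le_trans (by positivity : (0:ℝ) ≤ (k:ℝ)/N) hmemIoc.1.le,
            le_trans hmemIoc.2 (hcellmem k hkM).2.2⟩
        have hdist : dist (((k:ℝ)+1)/N) t < δ := by
          rw [Real.dist_eq,
            abs_of_nonneg (by linarith [hmemIoc.2] : (0:ℝ) ≤ ((k:ℝ)+1)/N - t)]
          have h4 := hmemIoc.1
          have h5 : ((k:ℝ)+1)/N - (k:ℝ)/N = 1/N := hca
          linarith
        have h6 := hucδ (((k:ℝ)+1)/N) (hcellmem k hkM).2 t htmem hdist
        rw [Real.dist_eq] at h6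
        rw [Real.norm_eq_abs]
        exact h6.le
      have := intervalIntegral.norm_integral_le_of_norm_le_const hptwise
      rw [Real.norm_eq_abs] at this
      calc |∫ t in ((k:ℝ)/N)..(((k:ℝ)+1)/N), (gg (((k:ℝ)+1)/N) - gg t)|
          ≤ (ε/2) * |((k:ℝ)+1)/N - (k:ℝ)/N| := this
        _ = (ε/2) * (1/N) := by rw [hca, abs_of_pos (by positivity)]
    calc |∑ k ∈ range M, ((1/(N:ℝ)) * gg (((k:ℝ)+1)/N)
            - ∫ t in ((k:ℝ)/N)..(((k:ℝ)+1)/N), gg t)|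
        ≤ ∑ k ∈ range M, |(1/(N:ℝ)) * gg (((k:ℝ)+1)/N)
            - ∫ t in ((k:ℝ)/N)..(((k:ℝ)+1)/N), gg t| := Finset.abs_sum_le_sum_abs _ _
      _ ≤ ∑ _k ∈ range M, (ε/2) * (1/N) := Finset.sum_le_sum hterm
      _ = (M:ℝ) * ((ε/2) * (1/N)) := by rw [Finset.sum_const, Finset.card_range]; ring
      _ ≤ ε/2 := by
          have h7 : (M:ℝ) * ((ε/2)*(1/N)) ≤ (N:ℝ) * ((ε/2)*(1/N)) :=
            mul_le_mul_of_nonneg_right hMN (by positivity)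
          have h8 : (N:ℝ) * ((ε/2)*(1/N)) = ε/2 := by field_simp
          linarith
      _ < ε := by linarith
  have := hE.add hI
  rw [zero_add] at this
  exact this.congr fun N => by ring

lemma part1 (θ : ℝ) (h0 : 0 < θ) (h1 : θ < 1) :
    Tendsto (fun N : ℕ => (1/(N:ℝ)) * ∑ j ∈ Icc 1 ⌊θ*(N:ℝ)⌋₊, Real.log ((j:ℝ)/N)) atTop
      (nhds (θ * Real.log θ - θ)) := by
  set u : ℕ → ℝ := fun N => ((⌊θ*(N:ℝ)⌋₊ : ℝ))/N with hu_def
  have hu : Tendsto u atTop (nhds θ) :=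
    (tendsto_nat_floor_mul_div_atTop h0.le).comp tendsto_natCast_atTop_atTop
  have hF : Tendsto (fun N => u N * Real.log (u N) - u N) atTop (nhds (θ * Real.log θ - θ)) :=
    ((Real.continuous_mul_log.continuousAt).tendsto.comp hu).sub hu
  have hlogN : Tendsto (fun N : ℕ => Real.log N / N) atTop (nhds 0) :=
    (Real.isLittleO_log_id_atTop.tendsto_div_nhds_zero).comp tendsto_natCast_atTop_atTop
  have hD : Tendsto (fun N : ℕ => (1/(N:ℝ)) * ∑ j ∈ Icc 1 ⌊θ*(N:ℝ)⌋₊, Real.log ((j:ℝ)/N)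
      - (u N * Real.log (u N) - u N)) atTop (nhds 0) := by
    have hupper : Tendsto (fun N : ℕ => 1/(N:ℝ) + Real.log N / N) atTop (nhds 0) := by
      simpa using tendsto_one_div_atTop_nhds_zero_nat.add hlogN
    apply tendsto_of_tendsto_of_tendsto_of_le_of_le' tendsto_const_nhds hupper
    · filter_upwards [(tendsto_nat_floor_mul_atTop θ h0).eventually_ge_atTop 1,
        eventually_ge_atTop 1] with N hm hN
      exact (part1_bounds θ h0 h1 hN hm).1
    · filter_upwards [(tendsto_nat_floor_mul_atTop θ h0).eventually_ge_atTop 1,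
        eventually_ge_atTop 1] with N hm hN
      exact (part1_bounds θ h0 h1 hN hm).2
  have hcomb := hD.add hF
  rw [zero_add] at hcomb
  exact hcomb.congr fun N => by ring

/-- For every `0 < θ < 1`,
`lim_{N→∞} (1/N) Σ_{j=1}^{⌊θN⌋} log(2 sin(πj/N)) = ∫_0^θ log(2 sin(πt)) dt`. -/
theorem stmt3 (θ : ℝ) (h0 : 0 < θ) (h1 : θ < 1) :
    Filter.Tendsto
      (fun N : ℕ => (1 / (N : ℝ)) *
        ∑ j ∈ Finset.Icc 1 ⌊θ * (N : ℝ)⌋₊, Real.log (2 * Real.sin (Real.pi * j / N)))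
      Filter.atTop
      (nhds (∫ t in (0 : ℝ)..θ, Real.log (2 * Real.sin (Real.pi * t)))) := by
  have hP1 := part1 θ h0 h1
  have hP2 := part2 θ h0 h1
  have hcomb := hP1.add hP2
  have hgcθ : ContinuousOn gg (Set.Icc 0 θ) := gg_cont h1
  have hgint : IntervalIntegrable gg volume 0 θ := by
    apply ContinuousOn.intervalIntegrable
    rwa [Set.uIcc_of_le h0.le]
  have hIeq : (∫ t in (0:ℝ)..θ, Real.log (2 * Real.sin (Real.pi * t)))
      = (θ * Real.log θ - θ) + ∫ t in (0:ℝ)..θ, gg t := by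
    have heq1 : (∫ t in (0:ℝ)..θ, Real.log (2 * Real.sin (Real.pi * t)))
        = ∫ t in (0:ℝ)..θ, (Real.log t + gg t) := by
      apply intervalIntegral.integral_congr_ae'
      · filter_upwards with t ht
        exact gg_eq ht.1 (lt_of_le_of_lt ht.2 h1)
      · filter_upwards with t ht
        exact absurd ht (by simp [Set.mem_Ioc]; intro h; linarith)
    rw [heq1, intervalIntegral.integral_add (intLog h0.le h1.le) hgint, valLog h0.le h1.le]
  rw [hIeq]
  apply hcomb.congr'
  filter_upwards [eventually_ge_atTop 1] with N hN
  have hNpos : (0:ℝ) < N := by exact_mod_cast hN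
  have hMθ : ((⌊θ*(N:ℝ)⌋₊:ℕ):ℝ) ≤ θ * N := Nat.floor_le (by positivity)
  rw [← mul_add, ← Finset.sum_add_distrib]
  congr 1
  apply Finset.sum_congr rfl
  intro j hj
  obtain ⟨hj1, hjM⟩ := Finset.mem_Icc.1 hj
  have hj0 : (0:ℝ) < (j:ℝ)/N := div_pos (by exact_mod_cast hj1) hNpos
  have hjN : (j:ℝ) < N := by
    have : (j:ℝ) ≤ ((⌊θ*(N:ℝ)⌋₊:ℕ):ℝ) := by exact_mod_cast hjM
    nlinarith
  have hjlt : (j:ℝ)/N < 1 := (div_lt_one hNpos).2 hjN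
  have hpi : Real.pi * (j:ℝ) / N = Real.pi * ((j:ℝ)/N) := mul_div_assoc _ _ _
  rw [hpi]
  exact (gg_eq hj0 hjlt).symm
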